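/- Fix n ≥ 2 and a nonzero commutative ring A. Let D = {m ∈ ℕ^{n−1} : m_1 ≥ m_2 ≥ … ≥ m_{n−1}} be the set of dominant tuples. For each nonempty subset I ⊆ {1,…,n−1} fix a unit c_I ∈ A^×. For j = 1,…,n−1 define an A-linear operator T_j on the A-module of functions a : D → A by (T_j a)(m) = Σ_{I ⊆ {1,…,n−1}, |I| = j} c_I · a(m + e_I), where e_I denotes the indicator vector of I, and where by convention a(m + e_I) = 0 whenever m + e_I is not dominant. Then a function a : D → A lies in the common kernel of T_1, …, T_{n−1} if and only if a(m) = 0 for all m ≠ 0. In particular, the common kernel is a free A-module of rank one, spanned by the delta function at 0. -/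
import Mathlib


/-- The set of dominant (weakly decreasing) tuples in `ℕ^d`. -/
def domSet (d : ℕ) : Set (Fin d → ℕ) := {m | Antitone m}

/-- The indicator vector of a subset `I ⊆ {1,…,d}`. -/
def eI {d : ℕ} (I : Finset (Fin d)) : Fin d → ℕ := fun i => if i ∈ I then 1 else 0

open Classical in
/-- The Atkin–Lehner style operator `T_j` on functions on dominant tuples:
`(T_j a)(m) = ∑_{|I| = j} c_I · a(m + e_I)`, with `a` extended by zero off the
dominant set. -/
noncomputable def ALop (d : ℕ) (A : Type*) [CommRing A] (c : Finset (Fin d) → Aˣ)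
    (j : ℕ) (a : domSet d → A) : domSet d → A :=
  fun m => ∑ I ∈ Finset.powersetCard j (Finset.univ : Finset (Fin d)),
    (c I : A) * (if h : (m.1 + eI I) ∈ domSet d then a ⟨m.1 + eI I, h⟩ else 0)

/-! ### Auxiliary lemmas -/

lemma strictMono_fin_le {j : ℕ} (f : Fin j → ℕ) (hf : StrictMono f) :
    ∀ kv : ℕ, ∀ hk : kv < j, kv ≤ f ⟨kv, hk⟩ := by
  intro kv
  induction kv with
  | zero => intro _; exact Nat.zero_le _
  | succ i ih =>
      intro hk
      have h1 : i ≤ f ⟨i, by omega⟩ := ih (by omega)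
      have h2 : f ⟨i, by omega⟩ < f ⟨i + 1, hk⟩ := hf (by simp [Fin.lt_def])
      omega

/-- The initial segment `{i : ↑i < j}` of `Fin d` as a finset. -/
def Iseg (d j : ℕ) : Finset (Fin d) := Finset.univ.filter (fun i => (i : ℕ) < j)

lemma mem_Iseg {d j : ℕ} {i : Fin d} : i ∈ Iseg d j ↔ (i : ℕ) < j := by
  simp [Iseg]

lemma Iseg_eq_image {d j : ℕ} (hj : j ≤ d) :
    Iseg d j = Finset.image (Fin.castLE hj) Finset.univ := by
  ext i
  simp only [mem_Iseg, Finset.mem_image, Finset.mem_univ, true_and]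
  constructor
  · intro hi
    exact ⟨⟨(i : ℕ), hi⟩, by ext; simp⟩
  · rintro ⟨k, rfl⟩
    simpa using k.isLt

lemma card_Iseg {d j : ℕ} (hj : j ≤ d) : (Iseg d j).card = j := by
  rw [Iseg_eq_image hj, Finset.card_image_of_injective _ (Fin.castLE_injective hj)]
  simp

lemma sum_val_Iseg {d j : ℕ} (hj : j ≤ d) :
    ∑ i ∈ Iseg d j, (i : ℕ) = ∑ k : Fin j, (k : ℕ) := by
  rw [Iseg_eq_image hj, Finset.sum_image (fun a _ b _ h => Fin.castLE_injective hj h)]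
  simp

/-- Among subsets of `Fin d` of size `j`, the initial segment has the strictly smallest
sum of coordinates. -/
lemma sum_val_Iseg_lt {d j : ℕ} (hj : j ≤ d) (J : Finset (Fin d)) (hJc : J.card = j)
    (hne : J ≠ Iseg d j) : ∑ i ∈ Iseg d j, (i : ℕ) < ∑ i ∈ J, (i : ℕ) := by
  set e := J.orderEmbOfFin hJc with he
  have himg : Finset.image e Finset.univ = J := by
    have hr := Finset.range_orderEmbOfFin J hJc
    ext i
    simp only [Finset.mem_image, Finset.mem_univ, true_and]
    rw [show (∃ k, e k = i) ↔ i ∈ Set.range e from Iff.symm Set.mem_range, hr]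
    simp
  have hsum : ∑ i ∈ J, (i : ℕ) = ∑ k : Fin j, ((e k : Fin d) : ℕ) := by
    rw [← himg, Finset.sum_image (fun a _ b _ h => e.injective h)]
  have hmono : StrictMono (fun k : Fin j => ((e k : Fin d) : ℕ)) := by
    intro a b hab
    exact e.strictMono hab
  have hle : ∀ k : Fin j, (k : ℕ) ≤ ((e k : Fin d) : ℕ) := by
    intro k
    have := strictMono_fin_le _ hmono k.1 k.isLt
    simpa using this
  have hexists : ∃ k : Fin j, (k : ℕ) < ((e k : Fin d) : ℕ) := by
    by_contra hc
    push_neg at hc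
    have heq : ∀ k : Fin j, ((e k : Fin d) : ℕ) = (k : ℕ) :=
      fun k => le_antisymm (hc k) (hle k)
    apply hne
    rw [← himg, Iseg_eq_image hj]
    apply Finset.image_congr
    intro k _
    ext
    simp [heq k]
  rw [sum_val_Iseg hj, hsum]
  obtain ⟨k0, hk0⟩ := hexists
  exact Finset.sum_lt_sum (fun k _ => hle k) ⟨k0, Finset.mem_univ _, hk0⟩

/-- The corresponding statement for the weights `d - i`: the initial segment has the
strictly largest weight sum. -/
lemma sum_w_lt {d j : ℕ} (hj : j ≤ d) (J : Finset (Fin d)) (hJc : J.card = j)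
    (hne : J ≠ Iseg d j) :
    ∑ i ∈ J, (d - (i : ℕ)) < ∑ i ∈ Iseg d j, (d - (i : ℕ)) := by
  have key : ∀ S : Finset (Fin d),
      (∑ i ∈ S, (d - (i : ℕ))) + (∑ i ∈ S, (i : ℕ)) = S.card * d := by
    intro S
    rw [← Finset.sum_add_distrib]
    have : ∀ i ∈ S, (d - (i : ℕ)) + (i : ℕ) = d := by
      intro i _
      have := i.isLt
      omega
    rw [Finset.sum_congr rfl this, Finset.sum_const, smul_eq_mul]
  have h1 := key J
  have h2 := key (Iseg d j)
  have h3 := sum_val_Iseg_lt hj J hJc hne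
  have h4 := card_Iseg (d := d) hj
  rw [hJc] at h1
  rw [h4] at h2
  omega

/-- The weighted-size measure used for the induction. -/
def muAL (d : ℕ) (v : Fin d → ℕ) : ℕ := ∑ i : Fin d, (d - (i : ℕ)) * v i

lemma muAL_add_eI (d : ℕ) (v : Fin d → ℕ) (J : Finset (Fin d)) :
    muAL d (v + eI J) = muAL d v + ∑ i ∈ J, (d - (i : ℕ)) := by
  have h2 : ∑ i ∈ J, (d - (i : ℕ)) = ∑ i : Fin d, (d - (i : ℕ)) * eI J i := by
    simp only [eI, mul_ite, mul_one, mul_zero]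
    rw [Finset.sum_ite_mem, Finset.univ_inter]
  rw [muAL, muAL, h2, ← Finset.sum_add_distrib]
  exact Finset.sum_congr rfl fun i _ => by simp [Pi.add_apply, Nat.mul_add]

lemma block_char {d : ℕ} (v : Fin d → ℕ) (hv : Antitone v) (z : Fin d) (hz : ∀ i, z ≤ i)
    (i : Fin d) :
    i ∈ Finset.univ.filter (fun i => v i = v z) ↔
      (i : ℕ) < (Finset.univ.filter (fun i => v i = v z)).card := by
  set B := Finset.univ.filter (fun i => v i = v z) with hB
  have hdown : ∀ i i' : Fin d, i ≤ i' → i' ∈ B → i ∈ B := by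
    intro i i' hii hi'
    rw [hB, Finset.mem_filter] at hi' ⊢
    have h1 : v i' ≤ v i := hv hii
    have h2 : v i ≤ v z := hv (hz i)
    refine ⟨Finset.mem_univ _, ?_⟩
    have h3 := hi'.2
    omega
  constructor
  · intro hi
    have hsub : Finset.Iic i ⊆ B := fun i' hi' => hdown i' i (Finset.mem_Iic.1 hi') hi
    have hcc := Finset.card_le_card hsub
    rw [Fin.card_Iic] at hcc
    omega
  · intro hi
    by_contra hc
    have hsub : B ⊆ Finset.Iio i := by
      intro i' hi'
      rw [Finset.mem_Iio]
      by_contra h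
      push_neg at h
      exact hc (hdown i i' h hi')
    have hcc := Finset.card_le_card hsub
    rw [Fin.card_Iio] at hcc
    omega

/-- a function `a` on dominant tuples lies in the common kernel of
`T_1, …, T_d` iff `a` vanishes off `0`; in particular the common kernel is free of rank
one over `A`, spanned by the delta function at `0`. -/
theorem common_kernel_of_AL_operators
    (d : ℕ) (hd : 1 ≤ d) (A : Type*) [CommRing A] [Nontrivial A]
    (c : Finset (Fin d) → Aˣ) (a : domSet d → A) :
    ((∀ j : ℕ, 1 ≤ j → j ≤ d → ∀ m : domSet d, ALop d A c j a m = 0) ↔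
      (∀ m : domSet d, m.1 ≠ 0 → a m = 0)) ∧
    ((∀ j : ℕ, 1 ≤ j → j ≤ d → ∀ m : domSet d, ALop d A c j a m = 0) ↔
      (∃ t : A, a = fun m => if m.1 = 0 then t else 0)) := by
  classical
  have easy : (∀ m : domSet d, m.1 ≠ 0 → a m = 0) →
      (∀ j : ℕ, 1 ≤ j → j ≤ d → ∀ m : domSet d, ALop d A c j a m = 0) := by
    intro h0 j hj1 hjd m
    apply Finset.sum_eq_zero
    intro I hI
    have hIcard : I.card = j := Finset.mem_powersetCard_univ.1 hI
    obtain ⟨i0, hi0⟩ := Finset.card_pos.1 (by omega : 0 < I.card)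
    by_cases hdom : (m.1 + eI I) ∈ domSet d
    · rw [dif_pos hdom]
      have hne : m.1 + eI I ≠ 0 := by
        intro h
        have := congrFun h i0
        simp [Pi.add_apply, eI, hi0] at this
      rw [h0 ⟨_, hdom⟩ hne, mul_zero]
    · rw [dif_neg hdom, mul_zero]
  have hard : (∀ j : ℕ, 1 ≤ j → j ≤ d → ∀ m : domSet d, ALop d A c j a m = 0) →
      (∀ m : domSet d, m.1 ≠ 0 → a m = 0) := by
    intro hker
    have H : ∀ N : ℕ, ∀ m : domSet d, muAL d m.1 ≤ N → m.1 ≠ 0 → a m = 0 := by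
      intro N
      induction N using Nat.strong_induction_on with
      | _ N IH =>
      intro m hmu hm0
      obtain ⟨v, hv⟩ := m
      have hvAnti : Antitone v := hv
      set z : Fin d := ⟨0, hd⟩ with hzdef
      have hzle : ∀ i : Fin d, z ≤ i := fun i => by simp [hzdef, Fin.le_def]
      have hvz : 0 < v z := by
        rcases Nat.eq_zero_or_pos (v z) with h | h
        · exfalso
          apply hm0
          funext i
          have := hvAnti (hzle i)
          simp only [Pi.zero_apply]
          omega
        · exact h
      set B := Finset.univ.filter (fun i => v i = v z) with hB
      have hchar : ∀ i : Fin d, i ∈ B ↔ (i : ℕ) < B.card := block_char v hvAnti z hzle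
      set j := B.card with hj
      have hzB : z ∈ B := by rw [hB]; simp
      have hj1 : 1 ≤ j := Finset.card_pos.2 ⟨z, hzB⟩
      have hjd : j ≤ d := le_trans (Finset.card_le_univ B) (by simp)
      have hBI : B = Iseg d j := by
        ext i
        rw [mem_Iseg]
        exact hchar i
      have hvB : ∀ i, i ∈ B → v i = v z := by
        intro i hi
        rw [hB] at hi
        simpa using hi
      have hvnB : ∀ i, i ∉ B → v i ≠ v z := by
        intro i hi h
        exact hi (by rw [hB]; simp [h])
      have hvle : ∀ i, v i ≤ v z := fun i => hvAnti (hzle i)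
      set m' : Fin d → ℕ := fun i => v i - eI B i with hm'
      have hadd : m' + eI B = v := by
        funext i
        by_cases hi : i ∈ B
        · have h1 := hvB i hi
          simp only [hm', Pi.add_apply, eI, if_pos hi]
          omega
        · simp [hm', Pi.add_apply, eI, hi]
      have hm'anti : Antitone m' := by
        intro i i' hii
        have h1 : v i' ≤ v i := hvAnti hii
        by_cases hb1 : i ∈ B <;> by_cases hb2 : i' ∈ B
        · simp only [hm', eI, if_pos hb1, if_pos hb2]
          omega
        · have h2 := hvB i hb1
          have h3 := hvnB i' hb2
          have h4 := hvle i'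
          simp only [hm', eI, if_pos hb1, if_neg hb2]
          omega
        · refine absurd ?_ hb1
          have h2 := hvB i' hb2
          have h4 := hvle i
          rw [hB]
          simp only [Finset.mem_filter, Finset.mem_univ, true_and]
          omega
        · simp only [hm', eI, if_neg hb1, if_neg hb2]
          omega
      have hm'dom : m' ∈ domSet d := hm'anti
      have hrel := hker j hj1 hjd ⟨m', hm'dom⟩
      simp only [ALop] at hrel
      have hBmem : B ∈ Finset.powersetCard j (Finset.univ : Finset (Fin d)) :=
        Finset.mem_powersetCard_univ.2 hj.symm
      rw [← Finset.add_sum_erase _ _ hBmem] at hrel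
      have hcond : (m' + eI B) ∈ domSet d := by rw [hadd]; exact hv
      rw [dif_pos hcond] at hrel
      have hrw : a ⟨m' + eI B, hcond⟩ = a ⟨v, hv⟩ := congrArg a (Subtype.ext hadd)
      rw [hrw] at hrel
      have hzero : ∀ J ∈ (Finset.powersetCard j (Finset.univ : Finset (Fin d))).erase B,
          (c J : A) * (if h : (m' + eI J) ∈ domSet d then a ⟨m' + eI J, h⟩ else 0) = 0 := by
        intro J hJ
        obtain ⟨hJne, hJmem⟩ := Finset.mem_erase.1 hJ
        have hJcard : J.card = j := Finset.mem_powersetCard_univ.1 hJmem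
        by_cases hdom : (m' + eI J) ∈ domSet d
        · have hne0 : m' + eI J ≠ 0 := by
            obtain ⟨i0, hi0⟩ := Finset.card_pos.1 (by omega : 0 < J.card)
            intro h
            have := congrFun h i0
            simp [Pi.add_apply, eI, hi0] at this
          have hmuJ : muAL d (m' + eI J) < N := by
            have e1 := muAL_add_eI d m' J
            have e2 := muAL_add_eI d m' B
            have e3 : muAL d v ≤ N := hmu
            have e4 := sum_w_lt hjd J hJcard (by rw [← hBI]; exact hJne)
            rw [← hBI] at e4
            rw [hadd] at e2
            omega
          have hzJ := IH (muAL d (m' + eI J)) hmuJ ⟨_, hdom⟩ le_rfl hne0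
          rw [dif_pos hdom, hzJ, mul_zero]
        · rw [dif_neg hdom, mul_zero]
      rw [Finset.sum_eq_zero hzero, add_zero] at hrel
      exact ((c B).mul_right_eq_zero).1 hrel
    intro m hm0
    exact H (muAL d m.1) m le_rfl hm0
  refine ⟨⟨hard, easy⟩, ⟨?_, ?_⟩⟩
  · intro hker
    have h0 := hard hker
    have hzmem : (0 : Fin d → ℕ) ∈ domSet d := fun _ _ _ => le_rfl
    refine ⟨a ⟨0, hzmem⟩, ?_⟩
    funext m
    by_cases hm : m.1 = 0
    · rw [if_pos hm]
      exact congrArg a (Subtype.ext hm)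
    · rw [if_neg hm]
      exact h0 m hm
  · rintro ⟨t, rfl⟩
    apply easy
    intro m hm
    simp [if_neg hm]
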